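/- Let V be a finite set, E ⊆ V × V, with SIR parameters β : E → (0,1], γ : V → (0,1] and matching IC parameters p. Then for every seed set S ⊆ V and every vertex v ∈ V, P(some s ∈ S reaches v in 𝒢_IC) ≥ P(some s ∈ S reaches v in 𝒢_SIR); equivalently P(S ∩ RR_{𝒢_IC}(v) ≠ ∅) ≥ P(S ∩ RR_{𝒢_SIR}(v) ≠ ∅). -/

import Mathlib

open MeasureTheory ProbabilityTheory ENNReal

/-- `u` reaches `v` in the edge set `H`. -/
def reaches {V : Type*} (H : Finset (V × V)) (u v : V) : Prop :=
  Relation.ReflTransGen (fun x y => (x, y) ∈ H) u v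

namespace SirIc

lemma reaches_mono {V : Type*} {H H' : Finset (V × V)} (h : H ⊆ H') {a b : V} :
    reaches H a b → reaches H' a b :=
  fun hab => Relation.ReflTransGen.mono (r := fun x y => (x, y) ∈ H) (p := fun x y => (x, y) ∈ H')
    (fun _ _ hxy => h hxy) a b hab

lemma reaches_avoid {V : Type*} [DecidableEq V] (H : Finset (V × V)) (j : V × V) {a v : V}
    (h : reaches (insert j H) a v) : reaches H a v ∨ reaches (insert j H) j.1 v := by
  induction h using Relation.ReflTransGen.head_induction_on with
  | refl => exact Or.inl .refl
  | head hac hcv ih =>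
    rename_i x c
    rcases Finset.mem_insert.1 hac with he | he
    · right
      have hx : x = j.1 := congrArg Prod.fst he
      rw [← hx]
      exact Relation.ReflTransGen.head hac hcv
    · rcases ih with h1 | h1
      · exact Or.inl (Relation.ReflTransGen.head he h1)
      · exact Or.inr h1

lemma reaches_split {V : Type*} [DecidableEq V] (H : Finset (V × V)) (i j : V × V)
    (hij : i.1 = j.1) {a v : V} (h : reaches (insert i (insert j H)) a v) :
    reaches (insert i H) a v ∨ reaches (insert j H) a v := by
  induction h using Relation.ReflTransGen.head_induction_on with
  | refl => exact Or.inl .refl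
  | head hac hcv ih =>
    rename_i x c
    rcases Finset.mem_insert.1 hac with he | he
    · -- edge is i, x = i.1
      have hx : x = i.1 := congrArg Prod.fst he
      rcases ih with h1 | h1
      · exact Or.inl (Relation.ReflTransGen.head (Finset.mem_insert.2 (Or.inl he)) h1)
      · -- c reaches v in insert j H
        rcases reaches_avoid H j h1 with h2 | h2
        · exact Or.inl (Relation.ReflTransGen.head (Finset.mem_insert.2 (Or.inl he))
            (reaches_mono (Finset.subset_insert _ _) h2))
        · rw [hx, hij]; exact Or.inr h2
    · rcases Finset.mem_insert.1 he with he2 | he2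
      · -- edge is j
        have hx : x = j.1 := congrArg Prod.fst he2
        rcases ih with h1 | h1
        · rcases reaches_avoid H i (reaches_mono (by
            intro y hy
            rcases Finset.mem_insert.1 hy with h3 | h3
            · exact h3 ▸ Finset.mem_insert_self i H
            · exact Finset.mem_insert_of_mem h3) h1 : reaches (insert i H) c v) with h2 | h2
          · exact Or.inr (Relation.ReflTransGen.head (Finset.mem_insert.2 (Or.inl he2))
              (reaches_mono (Finset.subset_insert _ _) h2))
          · rw [hx, ← hij]; exact Or.inl h2
        · exact Or.inr (Relation.ReflTransGen.head (Finset.mem_insert.2 (Or.inl he2)) h1)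
      · rcases ih with h1 | h1
        · exact Or.inl (Relation.ReflTransGen.head (Finset.mem_insert_of_mem he2) h1)
        · exact Or.inr (Relation.ReflTransGen.head (Finset.mem_insert_of_mem he2) h1)

end SirIc

namespace SirIc

variable {V : Type*} [DecidableEq V]

noncomputable def PhiD (E : Finset (V × V)) (d : Finset (V × V) → ℝ) (θ : V × V → ℝ) : ℝ :=
  ∑ T ∈ E.powerset, d T * ((∏ e ∈ T, θ e) * ∏ e ∈ E \ T, (1 - θ e))

lemma prodθ_nonneg {E T : Finset (V × V)} (hT : T ∈ E.powerset) {θ : V × V → ℝ}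
    (hθ : ∀ e ∈ E, 0 ≤ θ e ∧ θ e ≤ 1) :
    0 ≤ (∏ e ∈ T, θ e) * ∏ e ∈ E \ T, (1 - θ e) := by
  have hTE := Finset.mem_powerset.1 hT
  apply mul_nonneg
  · exact Finset.prod_nonneg fun e he => (hθ e (hTE he)).1
  · exact Finset.prod_nonneg fun e he => by
      have := (hθ e (Finset.mem_sdiff.1 he).1).2; linarith

lemma PhiD_nonneg {E : Finset (V × V)} {d : Finset (V × V) → ℝ} {θ : V × V → ℝ}
    (hd : ∀ T ∈ E.powerset, 0 ≤ d T) (hθ : ∀ e ∈ E, 0 ≤ θ e ∧ θ e ≤ 1) :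
    0 ≤ PhiD E d θ :=
  Finset.sum_nonneg fun T hT => mul_nonneg (hd T hT) (prodθ_nonneg hT hθ)

lemma PhiD_le_coeff {E : Finset (V × V)} {d d' : Finset (V × V) → ℝ} {θ : V × V → ℝ}
    (hdd : ∀ T ∈ E.powerset, d T ≤ d' T) (hθ : ∀ e ∈ E, 0 ≤ θ e ∧ θ e ≤ 1) :
    PhiD E d θ ≤ PhiD E d' θ :=
  Finset.sum_le_sum fun T hT => mul_le_mul_of_nonneg_right (hdd T hT) (prodθ_nonneg hT hθ)

lemma PhiD_le_one {E : Finset (V × V)} {d : Finset (V × V) → ℝ} {θ : V × V → ℝ}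
    (hd : ∀ T ∈ E.powerset, d T ≤ 1) (hθ : ∀ e ∈ E, 0 ≤ θ e ∧ θ e ≤ 1) :
    PhiD E d θ ≤ 1 := by
  have h1 : PhiD E d θ ≤ PhiD E (fun _ => 1) θ := PhiD_le_coeff hd hθ
  have h2 : PhiD E (fun _ => 1) θ = ∏ e ∈ E, (θ e + (1 - θ e)) := by
    rw [Finset.prod_add]
    simp [PhiD]
  have h3 : ∏ e ∈ E, (θ e + (1 - θ e)) = 1 := by
    apply Finset.prod_eq_one; intro e _; ring
  linarith

lemma PhiD_congr {E : Finset (V × V)} (d : Finset (V × V) → ℝ) {θ θ' : V × V → ℝ}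
    (h : ∀ e ∈ E, θ e = θ' e) : PhiD E d θ = PhiD E d θ' := by
  apply Finset.sum_congr rfl
  intro T hT
  have hTE := Finset.mem_powerset.1 hT
  congr 1
  congr 1
  · exact Finset.prod_congr rfl fun e he => h e (hTE he)
  · exact Finset.prod_congr rfl fun e he => by rw [h e (Finset.mem_sdiff.1 he).1]

lemma PhiD_split {E : Finset (V × V)} {i : V × V} (hi : i ∈ E) (d : Finset (V × V) → ℝ)
    (θ : V × V → ℝ) :
    PhiD E d θ = θ i * PhiD (E.erase i) (fun T => d (insert i T)) θ
      + (1 - θ i) * PhiD (E.erase i) d θ := by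
  classical
  have hE : E = insert i (E.erase i) := (Finset.insert_erase hi).symm
  have hni : i ∉ E.erase i := Finset.notMem_erase i E
  rw [PhiD]
  rw [show E.powerset = (insert i (E.erase i)).powerset by rw [← hE]]
  rw [Finset.sum_powerset_insert hni]
  have key1 : ∀ T ∈ (E.erase i).powerset,
      d T * ((∏ e ∈ T, θ e) * ∏ e ∈ E \ T, (1 - θ e))
      = (1 - θ i) * (d T * ((∏ e ∈ T, θ e) * ∏ e ∈ (E.erase i) \ T, (1 - θ e))) := by
    intro T hT
    have hTE := Finset.mem_powerset.1 hT
    have hiT : i ∉ T := fun h => hni (hTE h)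
    have : E \ T = insert i ((E.erase i) \ T) := by
      ext x
      simp only [Finset.mem_sdiff, Finset.mem_insert, Finset.mem_erase]
      constructor
      · rintro ⟨hx1, hx2⟩
        by_cases hxi : x = i
        · exact Or.inl hxi
        · exact Or.inr ⟨⟨hxi, hx1⟩, hx2⟩
      · rintro (h | ⟨⟨h1, h2⟩, h3⟩)
        · subst h; exact ⟨hi, hiT⟩
        · exact ⟨h2, h3⟩
    rw [this, Finset.prod_insert (by simp [hni])]
    ring
  have key2 : ∀ T ∈ (E.erase i).powerset,
      d (insert i T) * ((∏ e ∈ insert i T, θ e) * ∏ e ∈ E \ insert i T, (1 - θ e))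
      = θ i * (d (insert i T) * ((∏ e ∈ T, θ e) * ∏ e ∈ (E.erase i) \ T, (1 - θ e))) := by
    intro T hT
    have hTE := Finset.mem_powerset.1 hT
    have hiT : i ∉ T := fun h => hni (hTE h)
    have hsd : E \ insert i T = (E.erase i) \ T := by
      ext x
      simp only [Finset.mem_sdiff, Finset.mem_insert, Finset.mem_erase]
      tauto
    rw [hsd, Finset.prod_insert hiT]
    ring
  rw [Finset.sum_congr rfl key1, Finset.sum_congr rfl key2, ← Finset.mul_sum, ← Finset.mul_sum]
  rw [PhiD, PhiD]
  ring

lemma PhiD_update_le {E : Finset (V × V)} {j : V × V} (hj : j ∈ E) {d : Finset (V × V) → ℝ}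
    (hd : ∀ T, d (insert j T) ≤ d T) {θ : V × V → ℝ}
    (hθ : ∀ e ∈ E, 0 ≤ θ e ∧ θ e ≤ 1) {x : ℝ} (hx : θ j ≤ x) (hx1 : x ≤ 1) :
    PhiD E d (Function.update θ j x) ≤ PhiD E d θ := by
  classical
  have hnj : j ∉ E.erase j := Finset.notMem_erase j E
  have hb : ∀ e ∈ E.erase j, 0 ≤ θ e ∧ θ e ≤ 1 := fun e he => hθ e (Finset.mem_of_mem_erase he)
  have hcongr : ∀ d' : Finset (V × V) → ℝ,
      PhiD (E.erase j) d' (Function.update θ j x) = PhiD (E.erase j) d' θ := by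
    intro d'
    apply PhiD_congr
    intro e he
    exact Function.update_of_ne (by rintro rfl; exact hnj he) _ _
  rw [PhiD_split hj d, PhiD_split hj d, hcongr, hcongr, Function.update_self]
  set A := PhiD (E.erase j) (fun T => d (insert j T)) θ with hA
  set B := PhiD (E.erase j) d θ with hB
  have hAB : A ≤ B := PhiD_le_coeff (fun T _ => hd T) hb
  nlinarith [sub_nonneg.2 hx, sub_nonneg.2 hAB]

lemma PhiD_piecewise_le {E : Finset (V × V)} {d : Finset (V × V) → ℝ} {θ θ' : V × V → ℝ}
    (M : Finset (V × V)) (hME : M ⊆ E)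
    (hθ : ∀ e ∈ E, 0 ≤ θ e ∧ θ e ≤ 1) (hθ' : ∀ e ∈ E, 0 ≤ θ' e ∧ θ' e ≤ 1)
    (hle : ∀ j ∈ M, θ j ≤ θ' j) (hd : ∀ j ∈ M, ∀ T, d (insert j T) ≤ d T) :
    PhiD E d (fun e => if e ∈ M then θ' e else θ e) ≤ PhiD E d θ := by
  classical
  induction M using Finset.induction with
  | empty => simp
  | insert _ _ hjM ih =>
    rename_i j M
    have hME' : M ⊆ E := fun x hx => hME (Finset.mem_insert_of_mem hx)
    have hjE : j ∈ E := hME (Finset.mem_insert_self j M)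
    set mid : V × V → ℝ := fun e => if e ∈ M then θ' e else θ e with hmid
    have heq : (fun e => if e ∈ insert j M then θ' e else θ e) = Function.update mid j (θ' j) := by
      funext e
      by_cases he : e = j
      · subst he; simp [Function.update_self, hjM, mid]
      · rw [Function.update_of_ne he]
        simp only [Finset.mem_insert, mid]
        by_cases heM : e ∈ M <;> simp [heM, he]
    have hmidb : ∀ e ∈ E, 0 ≤ mid e ∧ mid e ≤ 1 := by
      intro e he
      by_cases heM : e ∈ M <;> simp [mid, heM]
      · exact hθ' e he
      · exact hθ e he
    have hmidj : mid j = θ j := by simp [mid, hjM]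
    rw [heq]
    calc PhiD E d (Function.update mid j (θ' j))
        ≤ PhiD E d mid := by
          apply PhiD_update_le hjE (hd j (Finset.mem_insert_self j M)) hmidb
          · rw [hmidj]; exact hle j (Finset.mem_insert_self j M)
          · exact (hθ' j hjE).2
      _ ≤ PhiD E d θ := ih hME' (fun j hj => hle j (Finset.mem_insert_of_mem hj))
            (fun j hj => hd j (Finset.mem_insert_of_mem hj))

end SirIc

namespace SirIc

set_option maxHeartbeats 1000000 in
lemma chebyshev_tsum {w a b : ℕ → ℝ} (hw0 : ∀ n, 0 ≤ w n) (hws : Summable w)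
    (hw1 : ∑' n, w n = 1)
    (ha : Monotone a) (ha0 : ∀ n, 0 ≤ a n) (ha1 : ∀ n, a n ≤ 1)
    (hb : Antitone b) (hb0 : ∀ n, 0 ≤ b n) (hb1 : ∀ n, b n ≤ 1) :
    ∑' n, w n * (a n * b n) ≤ (∑' n, w n * a n) * (∑' n, w n * b n) := by
  have hbound : ∀ (f : ℕ → ℝ), (∀ n, 0 ≤ f n) → (∀ n, f n ≤ 1) →
      Summable (fun n => w n * f n) := by
    intro f h0 h1
    refine Summable.of_nonneg_of_le (fun n => mul_nonneg (hw0 n) (h0 n))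
      (fun n => ?_) hws
    calc w n * f n ≤ w n * 1 := mul_le_mul_of_nonneg_left (h1 n) (hw0 n)
      _ = w n := mul_one _
  have hsab : Summable (fun n => w n * (a n * b n)) :=
    hbound _ (fun n => mul_nonneg (ha0 n) (hb0 n))
      (fun n => mul_le_one₀ (ha1 n) (hb0 n) (hb1 n))
  have hsa : Summable (fun n => w n * a n) := hbound a ha0 ha1
  have hsb : Summable (fun n => w n * b n) := hbound b hb0 hb1
  -- pair sums
  have hF1 : Summable (fun q : ℕ × ℕ => (w q.1 * (a q.1 * b q.1)) * w q.2) :=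
    hsab.mul_of_nonneg hws
      (fun n => mul_nonneg (hw0 n) (mul_nonneg (ha0 n) (hb0 n))) hw0
  have hF2 : Summable (fun q : ℕ × ℕ => w q.1 * (w q.2 * (a q.2 * b q.2))) :=
    hws.mul_of_nonneg hsab hw0
      (fun n => mul_nonneg (hw0 n) (mul_nonneg (ha0 n) (hb0 n)))
  have hG1 : Summable (fun q : ℕ × ℕ => (w q.1 * a q.1) * (w q.2 * b q.2)) :=
    hsa.mul_of_nonneg hsb (fun n => mul_nonneg (hw0 n) (ha0 n))
      (fun n => mul_nonneg (hw0 n) (hb0 n))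
  have hG2 : Summable (fun q : ℕ × ℕ => (w q.1 * b q.1) * (w q.2 * a q.2)) :=
    hsb.mul_of_nonneg hsa (fun n => mul_nonneg (hw0 n) (hb0 n))
      (fun n => mul_nonneg (hw0 n) (ha0 n))
  have hptwise : ∀ q : ℕ × ℕ,
      (w q.1 * (a q.1 * b q.1)) * w q.2 + w q.1 * (w q.2 * (a q.2 * b q.2))
      ≤ (w q.1 * a q.1) * (w q.2 * b q.2) + (w q.1 * b q.1) * (w q.2 * a q.2) := by
    rintro ⟨s, t⟩
    simp only
    rcases le_total s t with hst | hst
    · have h1 : 0 ≤ (w s * w t) * ((a t - a s) * (b s - b t)) :=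
        mul_nonneg (mul_nonneg (hw0 s) (hw0 t))
          (mul_nonneg (sub_nonneg.2 (ha hst)) (sub_nonneg.2 (hb hst)))
      nlinarith [h1]
    · have h1 : 0 ≤ (w s * w t) * ((a s - a t) * (b t - b s)) :=
        mul_nonneg (mul_nonneg (hw0 s) (hw0 t))
          (mul_nonneg (sub_nonneg.2 (ha hst)) (sub_nonneg.2 (hb hst)))
      nlinarith [h1]
  have hmain : ∑' q : ℕ × ℕ, ((w q.1 * (a q.1 * b q.1)) * w q.2
        + w q.1 * (w q.2 * (a q.2 * b q.2)))
      ≤ ∑' q : ℕ × ℕ, ((w q.1 * a q.1) * (w q.2 * b q.2)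
        + (w q.1 * b q.1) * (w q.2 * a q.2)) :=
    (hF1.add hF2).tsum_le_tsum hptwise (hG1.add hG2)
  rw [hF1.tsum_add hF2, hG1.tsum_add hG2] at hmain
  rw [← hsab.tsum_mul_tsum hws hF1, ← hws.tsum_mul_tsum hsab hF2,
    ← hsa.tsum_mul_tsum hsb hG1, ← hsb.tsum_mul_tsum hsa hG2, hw1] at hmain
  linarith

lemma step_real {w a A B : ℕ → ℝ} (pi : ℝ)
    (hw0 : ∀ n, 0 ≤ w n) (hws : Summable w) (hw1 : ∑' n, w n = 1)
    (ha : Monotone a) (ha0 : ∀ n, 0 ≤ a n) (ha1 : ∀ n, a n ≤ 1)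
    (hpa : ∑' n, w n * a n = pi)
    (hB0 : ∀ n, 0 ≤ B n) (hBA : ∀ n, B n ≤ A n) (hA1 : ∀ n, A n ≤ 1)
    (hC : Antitone (fun n => A n - B n)) :
    ∑' n, w n * (a n * A n + (1 - a n) * B n)
      ≤ ∑' n, w n * (pi * A n + (1 - pi) * B n) := by
  have hbound : ∀ (f : ℕ → ℝ), (∀ n, 0 ≤ f n) → (∀ n, f n ≤ 1) →
      Summable (fun n => w n * f n) := by
    intro f h0 h1
    refine Summable.of_nonneg_of_le (fun n => mul_nonneg (hw0 n) (h0 n))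
      (fun n => ?_) hws
    calc w n * f n ≤ w n * 1 := mul_le_mul_of_nonneg_left (h1 n) (hw0 n)
      _ = w n := mul_one _
  set C : ℕ → ℝ := fun n => A n - B n with hCdef
  have hC0 : ∀ n, 0 ≤ C n := fun n => sub_nonneg.2 (hBA n)
  have hC1 : ∀ n, C n ≤ 1 := fun n => by
    have := hB0 n; have := hA1 n; simp only [hCdef]; linarith
  have hB1 : ∀ n, B n ≤ 1 := fun n => le_trans (hBA n) (hA1 n)
  have hsB : Summable (fun n => w n * B n) := hbound B hB0 hB1
  have hsaC : Summable (fun n => w n * (a n * C n)) :=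
    hbound _ (fun n => mul_nonneg (ha0 n) (hC0 n))
      (fun n => mul_le_one₀ (ha1 n) (hC0 n) (hC1 n))
  have hsC : Summable (fun n => w n * C n) := hbound C hC0 hC1
  have hsa : Summable (fun n => w n * a n) := hbound a ha0 ha1
  have lhs_eq : ∑' n, w n * (a n * A n + (1 - a n) * B n)
      = (∑' n, w n * B n) + ∑' n, w n * (a n * C n) := by
    rw [← hsB.tsum_add hsaC]
    apply tsum_congr
    intro n
    simp only [hCdef]
    ring
  have rhs_eq : ∑' n, w n * (pi * A n + (1 - pi) * B n)
      = (∑' n, w n * B n) + pi * ∑' n, w n * C n := by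
    rw [← tsum_mul_left, ← hsB.tsum_add (hsC.mul_left pi)]
    apply tsum_congr
    intro n
    simp only [hCdef]
    ring
  rw [lhs_eq, rhs_eq]
  have := chebyshev_tsum hw0 hws hw1 ha ha0 ha1 hC hC0 hC1
  rw [hpa] at this
  linarith

end SirIc

namespace SirIc

noncomputable def wgeo (g : ℝ) (n : ℕ) : ℝ := if n = 0 then 0 else g * (1 - g) ^ (n - 1)

lemma wgeo_succ (g : ℝ) (n : ℕ) : wgeo g (n + 1) = g * (1 - g) ^ n := by
  simp [wgeo]

lemma wgeo_nonneg {g : ℝ} (h0 : 0 < g) (h1 : g ≤ 1) (n : ℕ) : 0 ≤ wgeo g n := by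
  cases n with
  | zero => simp [wgeo]
  | succ n => rw [wgeo_succ]; exact mul_nonneg h0.le (pow_nonneg (by linarith) n)

lemma summable_geom_mul {g : ℝ} (h0 : 0 < g) (h1 : g ≤ 1) :
    Summable (fun n => g * (1 - g) ^ n) :=
  (summable_geometric_of_lt_one (by linarith) (by linarith)).mul_left g

lemma summable_wgeo {g : ℝ} (h0 : 0 < g) (h1 : g ≤ 1) : Summable (wgeo g) := by
  have := (summable_nat_add_iff (f := wgeo g) 1).1 (by
    simpa [wgeo_succ] using summable_geom_mul h0 h1)
  exact this

lemma tsum_geom_mul {g : ℝ} (h0 : 0 < g) (h1 : g ≤ 1) :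
    ∑' n, g * (1 - g) ^ n = 1 := by
  rw [tsum_mul_left, tsum_geometric_of_lt_one (by linarith) (by linarith)]
  field_simp
  rw [show (1:ℝ) - (1 - g) = g by ring, div_self h0.ne']

lemma tsum_wgeo {g : ℝ} (h0 : 0 < g) (h1 : g ≤ 1) : ∑' n, wgeo g n = 1 := by
  rw [(summable_wgeo h0 h1).tsum_eq_zero_add]
  simp only [wgeo_succ, wgeo]
  simpa using tsum_geom_mul h0 h1

lemma qfun_monotone {b : ℝ} (h0 : 0 < b) (h1 : b ≤ 1) :
    Monotone (fun n : ℕ => 1 - (1 - b) ^ n) := by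
  intro m n hmn
  simp only
  have := pow_le_pow_of_le_one (by linarith : (0:ℝ) ≤ 1 - b) (by linarith) hmn
  linarith

lemma qfun_mem {b : ℝ} (h0 : 0 < b) (h1 : b ≤ 1) (n : ℕ) :
    0 ≤ 1 - (1 - b) ^ n ∧ 1 - (1 - b) ^ n ≤ 1 := by
  have h2 : (0:ℝ) ≤ (1 - b) ^ n := pow_nonneg (by linarith) n
  have h3 : (1 - b) ^ n ≤ 1 := pow_le_one₀ (by linarith) (by linarith)
  constructor <;> linarith

lemma sum_geom_fin {b : ℝ} (n : ℕ) :
    ∑ s ∈ Finset.range n, b * (1 - b) ^ s = 1 - (1 - b) ^ n := by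
  induction n with
  | zero => simp
  | succ n ih => rw [Finset.sum_range_succ, ih, pow_succ]; ring

lemma tsum_wgeo_mul_qfun {g b : ℝ} (hg0 : 0 < g) (hg1 : g ≤ 1) (hb0 : 0 < b) (hb1 : b ≤ 1) :
    ∑' n, wgeo g n * (1 - (1 - b) ^ n) = b / (g + b - g * b) := by
  have hD : 0 < g + b - g * b := by nlinarith
  have hr0 : (0:ℝ) ≤ (1 - g) * (1 - b) := by nlinarith
  have hr1 : (1 - g) * (1 - b) < 1 := by nlinarith
  have hs1 : Summable (fun n => g * (1 - g) ^ n) := summable_geom_mul hg0 hg1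
  have hs2 : Summable (fun n : ℕ => g * (1 - b) * ((1 - g) * (1 - b)) ^ n) :=
    (summable_geometric_of_lt_one hr0 hr1).mul_left _
  have hsm : Summable (fun n => wgeo g n * (1 - (1 - b) ^ n)) := by
    refine Summable.of_nonneg_of_le ?_ ?_ (summable_wgeo hg0 hg1)
    · intro n
      exact mul_nonneg (wgeo_nonneg hg0 hg1 n) (qfun_mem hb0 hb1 n).1
    · intro n
      calc wgeo g n * (1 - (1 - b) ^ n) ≤ wgeo g n * 1 :=
            mul_le_mul_of_nonneg_left (qfun_mem hb0 hb1 n).2 (wgeo_nonneg hg0 hg1 n)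
        _ = wgeo g n := mul_one _
  rw [hsm.tsum_eq_zero_add]
  have heq : ∀ n : ℕ, wgeo g (n + 1) * (1 - (1 - b) ^ (n + 1))
      = g * (1 - g) ^ n - g * (1 - b) * ((1 - g) * (1 - b)) ^ n := by
    intro n
    rw [wgeo_succ, mul_pow, pow_succ]
    ring
  have : ∑' n : ℕ, wgeo g (n + 1) * (1 - (1 - b) ^ (n + 1))
      = (∑' n : ℕ, g * (1 - g) ^ n) - ∑' n : ℕ, g * (1 - b) * ((1 - g) * (1 - b)) ^ n := by
    rw [← hs1.tsum_sub hs2]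
    exact tsum_congr heq
  rw [show wgeo g 0 * (1 - (1 - b) ^ 0) = 0 by simp [wgeo], this, tsum_geom_mul hg0 hg1,
    tsum_mul_left, tsum_geometric_of_lt_one hr0 hr1]
  rw [zero_add]
  have h1 : 1 - (1 - g) * (1 - b) = g + b - g * b := by ring
  rw [h1]
  field_simp
  ring

end SirIc

namespace SirIc

-- assume PhiD etc from s2, chebyshev/step_real from s3 (concatenated later)

open Classical in
noncomputable def indQ {V : Type*} (Q : Finset (V × V) → Prop) (T : Finset (V × V)) : ℝ :=
  if Q T then 1 else 0

variable {V : Type*} [DecidableEq V]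

lemma indQ_nonneg (Q : Finset (V × V) → Prop) (T : Finset (V × V)) : 0 ≤ indQ Q T := by
  unfold indQ; split <;> norm_num

lemma indQ_le_one (Q : Finset (V × V) → Prop) (T : Finset (V × V)) : indQ Q T ≤ 1 := by
  unfold indQ; split <;> norm_num

lemma indQ_mono {Q : Finset (V × V) → Prop} (hQm : ∀ T1 T2, T1 ⊆ T2 → Q T1 → Q T2)
    {T1 T2 : Finset (V × V)} (h : T1 ⊆ T2) : indQ Q T1 ≤ indQ Q T2 := by
  unfold indQ
  split
  · rename_i hq
    rw [if_pos (hQm _ _ h hq)]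
  · split <;> norm_num

lemma dC_le {Q : Finset (V × V) → Prop} (hQm : ∀ T1 T2, T1 ⊆ T2 → Q T1 → Q T2)
    (hQs : ∀ (T : Finset (V × V)) (i j : V × V), i.1 = j.1 →
      Q (insert i (insert j T)) → Q (insert i T) ∨ Q (insert j T))
    {i j : V × V} (hij : j.1 = i.1) (T : Finset (V × V)) :
    indQ Q (insert i (insert j T)) - indQ Q (insert j T)
      ≤ indQ Q (insert i T) - indQ Q T := by
  by_cases h1 : Q (insert i (insert j T))
  · by_cases h2 : Q (insert j T)
    · have hRHS : indQ Q T ≤ indQ Q (insert i T) := indQ_mono hQm (Finset.subset_insert _ _)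
      unfold indQ
      rw [if_pos h1, if_pos h2]
      unfold indQ at hRHS
      linarith
    · have h3 : Q (insert i T) := by
        rcases hQs T i j hij.symm h1 with h | h
        · exact h
        · exact absurd h h2
      have h4 : ¬ Q T := fun h => h2 (hQm _ _ (Finset.subset_insert _ _) h)
      unfold indQ
      rw [if_pos h1, if_neg h2, if_pos h3, if_neg h4]
  · have hLHS : indQ Q (insert i (insert j T)) - indQ Q (insert j T) ≤ 0 := by
      unfold indQ
      rw [if_neg h1]
      split <;> norm_num
    have hRHS : 0 ≤ indQ Q (insert i T) - indQ Q T := by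
      have := indQ_mono hQm (Finset.subset_insert i T) (Q := Q)
      linarith
    linarith

lemma PhiD_sub (E : Finset (V × V)) (d1 d2 : Finset (V × V) → ℝ) (θ : V × V → ℝ) :
    PhiD E d1 θ - PhiD E d2 θ = PhiD E (fun T => d1 T - d2 T) θ := by
  unfold PhiD
  rw [← Finset.sum_sub_distrib]
  apply Finset.sum_congr rfl
  intros; ring

lemma step_core (E : Finset (V × V)) (Q : Finset (V × V) → Prop)
    (hQm : ∀ T1 T2, T1 ⊆ T2 → Q T1 → Q T2)
    (hQs : ∀ (T : Finset (V × V)) (i j : V × V), i.1 = j.1 →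
      Q (insert i (insert j T)) → Q (insert i T) ∨ Q (insert j T))
    {i : V × V} (hiE : i ∈ E)
    (w : ℕ → ℝ) (hw0 : ∀ n, 0 ≤ w n) (hws : Summable w) (hw1 : ∑' n, w n = 1)
    (θ : ℕ → (V × V) → ℝ)
    (hθ01 : ∀ n, ∀ e ∈ E, 0 ≤ θ n e ∧ θ n e ≤ 1)
    (hconst : ∀ e ∈ E, e.1 ≠ i.1 → ∀ m n : ℕ, θ m e = θ n e)
    (hmono : ∀ e ∈ E, e.1 = i.1 → Monotone (fun n => θ n e))
    (pi : ℝ) (hpa : ∑' n, w n * θ n i = pi) :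
    ∑' n, w n * PhiD E (indQ Q) (θ n)
      ≤ ∑' n, w n * PhiD E (indQ Q) (Function.update (θ n) i pi) := by
  classical
  set E' := E.erase i with hE'
  have hE'E : ∀ e ∈ E', e ∈ E := fun e he => Finset.mem_of_mem_erase he
  have hiE' : i ∉ E' := Finset.notMem_erase i E
  set M := E'.filter (fun e => e.1 = i.1) with hM
  set A : ℕ → ℝ := fun n => PhiD E' (fun T => indQ Q (insert i T)) (θ n) with hA
  set B : ℕ → ℝ := fun n => PhiD E' (indQ Q) (θ n) with hB
  have hbE' : ∀ n, ∀ e ∈ E', 0 ≤ θ n e ∧ θ n e ≤ 1 := fun n e he => hθ01 n e (hE'E e he)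
  have hid1 : ∀ n, PhiD E (indQ Q) (θ n) = θ n i * A n + (1 - θ n i) * B n := fun n =>
    PhiD_split hiE _ _
  have hid2 : ∀ n, PhiD E (indQ Q) (Function.update (θ n) i pi)
      = pi * A n + (1 - pi) * B n := by
    intro n
    rw [PhiD_split hiE _ _, Function.update_self]
    have hc : ∀ d' : Finset (V × V) → ℝ,
        PhiD E' d' (Function.update (θ n) i pi) = PhiD E' d' (θ n) := by
      intro d'
      apply PhiD_congr
      intro e he
      exact Function.update_of_ne (by rintro rfl; exact hiE' he) _ _
    rw [hc, hc]
  have hB0 : ∀ n, 0 ≤ B n := fun n => PhiD_nonneg (fun T _ => indQ_nonneg Q T) (hbE' n)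
  have hBA : ∀ n, B n ≤ A n := fun n =>
    PhiD_le_coeff (fun T _ => indQ_mono hQm (Finset.subset_insert _ _)) (hbE' n)
  have hA1 : ∀ n, A n ≤ 1 := fun n =>
    PhiD_le_one (fun T _ => indQ_le_one Q _) (hbE' n)
  have hCanti : Antitone (fun n => A n - B n) := by
    intro m n hmn
    simp only [hA, hB, PhiD_sub]
    have hcongr : PhiD E' (fun T => indQ Q (insert i T) - indQ Q T) (θ n)
        = PhiD E' (fun T => indQ Q (insert i T) - indQ Q T)
          (fun e => if e ∈ M then θ n e else θ m e) := by
      apply PhiD_congr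
      intro e he
      by_cases heM : e ∈ M
      · rw [if_pos heM]
      · rw [if_neg heM]
        have : e.1 ≠ i.1 := by
          intro h
          exact heM (Finset.mem_filter.2 ⟨he, h⟩)
        exact (hconst e (hE'E e he) this m n).symm
    rw [hcongr]
    apply PhiD_piecewise_le M (Finset.filter_subset _ _) (hbE' m) (hbE' n)
    · intro j hj
      have hjE' := Finset.mem_filter.1 hj
      exact hmono j (hE'E j hjE'.1) hjE'.2 hmn
    · intro j hj T
      exact dC_le hQm hQs (Finset.mem_filter.1 hj).2 T
  calc ∑' n, w n * PhiD E (indQ Q) (θ n)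
      = ∑' n, w n * (θ n i * A n + (1 - θ n i) * B n) := tsum_congr fun n => by rw [hid1]
    _ ≤ ∑' n, w n * (pi * A n + (1 - pi) * B n) := by
        apply step_real pi hw0 hws hw1 (hmono i hiE rfl)
          (fun n => (hθ01 n i hiE).1) (fun n => (hθ01 n i hiE).2) hpa hB0 hBA hA1 hCanti
    _ = ∑' n, w n * PhiD E (indQ Q) (Function.update (θ n) i pi) :=
        tsum_congr fun n => by rw [hid2]

end SirIc

namespace SirIc

open MeasureTheory

variable {V : Type*} [DecidableEq V]

lemma filter_eq_sets {Ω : Type*} (E T : Finset (V × V)) (hT : T ⊆ E)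
    (pred : Ω → (V × V) → Prop) [∀ ω e, Decidable (pred ω e)] :
    {ω : Ω | E.filter (pred ω) = T}
      = (⋂ e ∈ (T : Set (V × V)), {ω | pred ω e})
        ∩ ⋂ e ∈ ((E \ T : Finset (V × V)) : Set (V × V)), {ω | pred ω e}ᶜ := by
  ext ω
  simp only [Set.mem_setOf_eq, Set.mem_inter_iff, Set.mem_iInter, Finset.mem_coe,
    Finset.mem_sdiff, Set.mem_compl_iff]
  constructor
  · intro h
    constructor
    · intro e he
      rw [← h] at he
      exact (Finset.mem_filter.1 he).2
    · rintro e ⟨heE, heT⟩ hp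
      exact heT (h ▸ Finset.mem_filter.2 ⟨heE, hp⟩)
  · rintro ⟨h1, h2⟩
    ext e
    rw [Finset.mem_filter]
    constructor
    · rintro ⟨heE, hp⟩
      by_contra heT
      exact h2 e ⟨heE, heT⟩ hp
    · intro heT
      exact ⟨hT heT, h1 e heT⟩

lemma measure_filter_event {Ω : Type*} [MeasurableSpace Ω] (μ : Measure Ω)
    (E : Finset (V × V)) (Q : Finset (V × V) → Prop)
    (pred : Ω → (V × V) → Prop) [∀ ω e, Decidable (pred ω e)] [DecidablePred Q]
    (hmeas : ∀ T ∈ E.powerset, MeasurableSet {ω : Ω | E.filter (pred ω) = T}) :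
    μ {ω : Ω | Q (E.filter (pred ω))}
      = ∑ T ∈ E.powerset, (if Q T then μ {ω : Ω | E.filter (pred ω) = T} else 0) := by
  classical
  have hset : {ω : Ω | Q (E.filter (pred ω))}
      = ⋃ T ∈ ↑(E.powerset.filter Q), {ω : Ω | E.filter (pred ω) = T} := by
    ext ω
    simp only [Set.mem_setOf_eq, Set.mem_iUnion, Finset.mem_coe, Finset.mem_filter,
      Finset.mem_powerset]
    constructor
    · intro h
      exact ⟨E.filter (pred ω), ⟨Finset.filter_subset _ _, h⟩, rfl⟩
    · rintro ⟨T, ⟨_, hQ⟩, hT⟩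
      rw [hT]; exact hQ
  have hdisj : Set.PairwiseDisjoint ↑(E.powerset.filter Q)
      (fun T => {ω : Ω | E.filter (pred ω) = T}) := by
    intro T1 h1 T2 h2 hne
    simp only [Function.onFun]
    apply Set.disjoint_left.2
    intro ω hω1 hω2
    exact hne (by rw [← hω1, ← hω2])
  rw [hset, measure_biUnion_finset hdisj
    (fun T hT => hmeas T (Finset.mem_of_mem_filter T hT))]
  rw [Finset.sum_filter]

end SirIc

namespace SirIc

open MeasureTheory ProbabilityTheory

variable {V : Type*} [DecidableEq V] [Fintype V]

lemma IC_prod {Ω₁ : Type*} [MeasurableSpace Ω₁] (μ₁ : Measure Ω₁) [IsProbabilityMeasure μ₁]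
    (B : V × V → Ω₁ → Bool) (hBmeas : ∀ e, Measurable (B e))
    (hBindep : iIndepFun B μ₁)
    (E T : Finset (V × V)) (hT : T ⊆ E) :
    μ₁ {ω | E.filter (fun e => B e ω = true) = T}
      = (∏ e ∈ T, μ₁ {ω | B e ω = true}) * ∏ e ∈ E \ T, (1 - μ₁ {ω | B e ω = true}) := by
  classical
  have hX : ∀ e, MeasurableSet {ω | B e ω = true} := by
    intro e
    exact hBmeas e (measurableSet_singleton true)
  set X : V × V → Set Ω₁ := fun e => {ω | B e ω = true} with hXdef
  set s : V × V → Set Ω₁ := fun e => if e ∈ T then X e else (X e)ᶜ with hsdef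
  have hinter : {ω : Ω₁ | E.filter (fun e => B e ω = true) = T} = ⋂ e ∈ E, s e := by
    rw [filter_eq_sets E T hT (fun ω e => B e ω = true)]
    ext ω
    simp only [Set.mem_inter_iff, Set.mem_iInter, Finset.mem_coe, Finset.mem_sdiff,
      Set.mem_compl_iff, hsdef]
    constructor
    · rintro ⟨h1, h2⟩ e he
      by_cases heT : e ∈ T
      · rw [if_pos heT]; exact h1 e heT
      · rw [if_neg heT]; exact h2 e ⟨he, heT⟩
    · intro h
      constructor
      · intro e he
        have := h e (hT he)
        rwa [if_pos he] at this
      · rintro e ⟨heE, heT⟩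
        have := h e heE
        rwa [if_neg heT] at this
  have hprod := hBindep.meas_biInter (S := E) (s := s) ?_
  · rw [hinter, hprod]
    rw [← Finset.prod_sdiff hT]
    rw [mul_comm]
    congr 1
    · apply Finset.prod_congr rfl
      intro e he
      rw [hsdef]
      simp only
      rw [if_pos he]
    · apply Finset.prod_congr rfl
      intro e he
      rw [hsdef]
      simp only
      rw [if_neg (Finset.mem_sdiff.1 he).2]
      rw [prob_compl_eq_one_sub (hX e)]
  · intro e _
    by_cases heT : e ∈ T
    · refine ⟨{true}, trivial, ?_⟩
      rw [hsdef]; simp only; rw [if_pos heT]; rfl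
    · refine ⟨{true}ᶜ, trivial, ?_⟩
      rw [hsdef]; simp only; rw [if_neg heT, Set.preimage_compl]; rfl

lemma SIR_prod {Ω₂ : Type*} [MeasurableSpace Ω₂] (μ₂ : Measure Ω₂) [IsProbabilityMeasure μ₂]
    (R : V → Ω₂ → ℕ) (I : V × V → Ω₂ → ℕ)
    (hRmeas : ∀ v, Measurable (R v)) (hImeas : ∀ e, Measurable (I e))
    (hindep : iIndepFun (Sum.elim R I : V ⊕ (V × V) → Ω₂ → ℕ) μ₂)
    (E T : Finset (V × V)) (hT : T ⊆ E) :
    μ₂ {ω | E.filter (fun e => I e ω ≤ R e.1 ω) = T}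
      = ∑' r : V → ℕ, (∏ u, μ₂ {ω | R u ω = r u})
          * ((∏ e ∈ T, μ₂ {ω | I e ω ≤ r e.1}) * ∏ e ∈ E \ T, μ₂ {ω | r e.1 < I e ω}) := by
  classical
  have hmeasR : ∀ (u : V) (n : ℕ), MeasurableSet {ω | R u ω = n} := fun u n =>
    hRmeas u (measurableSet_singleton n)
  set Sset : (V → ℕ) → Set Ω₂ := fun r =>
    (⋂ u, {ω | R u ω = r u}) ∩ {ω | E.filter (fun e => I e ω ≤ R e.1 ω) = T} with hSdef
  have hcover : {ω : Ω₂ | E.filter (fun e => I e ω ≤ R e.1 ω) = T} = ⋃ r : V → ℕ, Sset r := by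
    ext ω
    constructor
    · intro h
      exact Set.mem_iUnion.2 ⟨fun u => R u ω, ⟨Set.mem_iInter.2 fun u => rfl, h⟩⟩
    · intro h
      rcases Set.mem_iUnion.1 h with ⟨r, hr⟩
      exact hr.2
  have hdisj : Pairwise (Function.onFun Disjoint Sset) := by
    intro r1 r2 hne
    apply Set.disjoint_left.2
    rintro ω ⟨h1, _⟩ ⟨h2, _⟩
    apply hne
    funext u
    have e1 := Set.mem_iInter.1 h1 u
    have e2 := Set.mem_iInter.1 h2 u
    simp only [Set.mem_setOf_eq] at e1 e2
    rw [← e1, ← e2]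
  -- per-r identity as a big intersection over a disjSum finset
  have hkey : ∀ r : V → ℕ, μ₂ (Sset r) = (∏ u, μ₂ {ω | R u ω = r u})
      * ((∏ e ∈ T, μ₂ {ω | I e ω ≤ r e.1}) * ∏ e ∈ E \ T, μ₂ {ω | r e.1 < I e ω}) := by
    intro r
    set g : V ⊕ (V × V) → Set Ω₂ := fun i =>
      Sum.elim (fun u => {ω | R u ω = r u})
        (fun e => if e ∈ T then {ω | I e ω ≤ r e.1} else {ω | r e.1 < I e ω}) i with hgdef
    have hset : Sset r = ⋂ i ∈ Finset.univ.disjSum E, g i := by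
      ext ω
      simp only [hSdef, Set.mem_inter_iff, Set.mem_iInter, Finset.mem_disjSum,
        Set.mem_setOf_eq]
      constructor
      · rintro ⟨h1, h2⟩ i hi
        have hR : ∀ u, R u ω = r u := h1
        rcases i with u | e
        · simp only [hgdef, Sum.elim_inl, Set.mem_setOf_eq]
          exact hR u
        · have heE : e ∈ E := by
            rcases hi with ⟨a, _, h⟩ | ⟨a, ha, h⟩
            · exact absurd h (by simp)
            · rw [Sum.inr.injEq] at h; rwa [← h]
          simp only [hgdef, Sum.elim_inr]
          by_cases heT : e ∈ T
          · rw [if_pos heT]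
            have : e ∈ E.filter (fun e => I e ω ≤ R e.1 ω) := h2 ▸ heT
            have hle := (Finset.mem_filter.1 this).2
            simp only [Set.mem_setOf_eq]
            rw [← hR e.1]
            exact hle
          · rw [if_neg heT]
            simp only [Set.mem_setOf_eq]
            rw [← hR e.1]
            by_contra hle
            push_neg at hle
            exact heT (h2 ▸ Finset.mem_filter.2 ⟨heE, hle⟩)
      · intro h
        have hR : ∀ u, R u ω = r u := fun u => by
          have := h (Sum.inl u) (by simp)
          simpa [hgdef] using this
        refine ⟨hR, ?_⟩
        ext e
        rw [Finset.mem_filter]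
        constructor
        · rintro ⟨heE, hle⟩
          by_contra heT
          have := h (Sum.inr e) (by simp [heE])
          simp only [hgdef, Sum.elim_inr, if_neg heT, Set.mem_setOf_eq] at this
          rw [hR e.1] at hle
          omega
        · intro heT
          have heE := hT heT
          have := h (Sum.inr e) (by simp [heE])
          simp only [hgdef, Sum.elim_inr, if_pos heT, Set.mem_setOf_eq] at this
          refine ⟨heE, ?_⟩
          rw [hR e.1]
          exact this
    have hprod := hindep.meas_biInter (S := Finset.univ.disjSum E) (s := g) ?_
    · rw [hset, hprod, Finset.prod_disjSum]
      have h1 : ∏ u, μ₂ (g (Sum.inl u)) = ∏ u, μ₂ {ω | R u ω = r u} :=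
        Finset.prod_congr rfl fun u _ => by simp [hgdef]
      have h2 : ∏ e ∈ E, μ₂ (g (Sum.inr e))
          = (∏ e ∈ T, μ₂ {ω | I e ω ≤ r e.1}) * ∏ e ∈ E \ T, μ₂ {ω | r e.1 < I e ω} := by
        rw [← Finset.prod_sdiff hT, mul_comm]
        congr 1
        · exact Finset.prod_congr rfl fun e he => by
            simp only [hgdef, Sum.elim_inr]; rw [if_pos he]
        · exact Finset.prod_congr rfl fun e he => by
            simp only [hgdef, Sum.elim_inr]; rw [if_neg (Finset.mem_sdiff.1 he).2]
      rw [h1, h2]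
    · rintro (u | e) _
      · refine ⟨{r u}, (Set.to_countable _).measurableSet, ?_⟩
        rfl
      · by_cases heT : e ∈ T
        · refine ⟨Set.Iic (r e.1), (Set.to_countable _).measurableSet, ?_⟩
          simp only [hgdef, Sum.elim_inr, if_pos heT]
          rfl
        · refine ⟨Set.Ioi (r e.1), (Set.to_countable _).measurableSet, ?_⟩
          simp only [hgdef, Sum.elim_inr, if_neg heT]
          rfl
  have hmeasS : ∀ r : V → ℕ, MeasurableSet (Sset r) := by
    intro r
    apply MeasurableSet.inter
    · exact MeasurableSet.iInter fun u => hmeasR u (r u)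
    · rw [filter_eq_sets E T hT (fun ω e => I e ω ≤ R e.1 ω)]
      apply MeasurableSet.inter
      · apply MeasurableSet.biInter (Finset.countable_toSet T)
        intro e _
        exact measurableSet_le (hImeas e) (hRmeas e.1)
      · apply MeasurableSet.biInter (Finset.countable_toSet (E \ T))
        intro e _
        exact (measurableSet_le (hImeas e) (hRmeas e.1)).compl
  rw [hcover, measure_iUnion hdisj hmeasS]
  exact tsum_congr hkey

end SirIc

namespace SirIc

open MeasureTheory ProbabilityTheory ENNReal

lemma marg_eq {Ω : Type*} [MeasurableSpace Ω] (μ : Measure Ω) [IsProbabilityMeasure μ]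
    (X : Ω → ℕ) (hX : Measurable X) (g : ℝ) (hg0 : 0 < g) (hg1 : g ≤ 1)
    (hdist : ∀ t : ℕ, 1 ≤ t → μ {ω | X ω = t} = ENNReal.ofReal (g * (1 - g) ^ (t - 1))) :
    ∀ n, μ {ω | X ω = n} = ENNReal.ofReal (wgeo g n) := by
  have hdist' : ∀ n : ℕ, μ {ω | X ω = n + 1} = ENNReal.ofReal (g * (1 - g) ^ n) := by
    intro n
    rw [hdist (n + 1) (by omega)]
    simp
  have hzero : μ {ω | X ω = 0} = 0 := by
    have hpart : (Set.univ : Set Ω) = ⋃ n : ℕ, {ω | X ω = n} := by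
      ext ω
      simp only [Set.mem_univ, Set.mem_iUnion, Set.mem_setOf_eq, true_iff]
      exact ⟨X ω, rfl⟩
    have hdisj : Pairwise (Function.onFun Disjoint (fun n : ℕ => {ω | X ω = n})) := by
      intro m n hmn
      apply Set.disjoint_left.2
      intro ω h1 h2
      simp only [Set.mem_setOf_eq] at h1 h2
      exact hmn (h1 ▸ h2.symm ▸ rfl)
    have hmeas : ∀ n : ℕ, MeasurableSet {ω | X ω = n} := fun n =>
      hX (measurableSet_singleton n)
    have h1 : (1 : ℝ≥0∞) = ∑' n : ℕ, μ {ω | X ω = n} := by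
      rw [← measure_iUnion hdisj hmeas, ← hpart, measure_univ]
    rw [tsum_eq_zero_add' ENNReal.summable] at h1
    have h2 : ∑' n : ℕ, μ {ω | X ω = n + 1} = 1 := by
      have : ∀ n : ℕ, μ {ω | X ω = n + 1} = ENNReal.ofReal (g * (1 - g) ^ n) := hdist'
      rw [tsum_congr this, ← ENNReal.ofReal_tsum_of_nonneg
        (fun n => mul_nonneg hg0.le (pow_nonneg (by linarith) n)) (summable_geom_mul hg0 hg1),
        tsum_geom_mul hg0 hg1, ENNReal.ofReal_one]
    rw [h2] at h1
    calc μ {ω | X ω = 0} = μ {ω | X ω = 0} + 1 - 1 :=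
          (ENNReal.add_sub_cancel_right ENNReal.one_ne_top).symm
      _ = 1 - 1 := by rw [← h1]
      _ = 0 := by simp
  intro n
  cases n with
  | zero => rw [hzero]; simp [wgeo]
  | succ n => rw [hdist', wgeo_succ]

lemma marg_le {Ω : Type*} [MeasurableSpace Ω] (μ : Measure Ω) [IsProbabilityMeasure μ]
    (X : Ω → ℕ) (hX : Measurable X) (b : ℝ) (hb0 : 0 < b) (hb1 : b ≤ 1)
    (hmarg : ∀ n, μ {ω | X ω = n} = ENNReal.ofReal (wgeo b n)) :
    ∀ n, μ {ω | X ω ≤ n} = ENNReal.ofReal (1 - (1 - b) ^ n) := by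
  intro n
  have hset : {ω | X ω ≤ n} = ⋃ s ∈ Finset.range (n + 1), {ω | X ω = s} := by
    ext ω
    simp only [Set.mem_setOf_eq, Set.mem_iUnion, Finset.mem_range]
    constructor
    · intro h; exact ⟨X ω, by omega, rfl⟩
    · rintro ⟨s, hs, h⟩; omega
  have hdisj : Set.PairwiseDisjoint ↑(Finset.range (n + 1)) (fun s : ℕ => {ω | X ω = s}) := by
    intro s1 _ s2 _ hne
    apply Set.disjoint_left.2
    intro ω h1 h2
    simp only [Set.mem_setOf_eq] at h1 h2
    exact hne (h1 ▸ h2.symm ▸ rfl)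
  rw [hset, measure_biUnion_finset hdisj (fun s _ => hX (measurableSet_singleton s))]
  have : ∀ s ∈ Finset.range (n + 1), μ {ω | X ω = s} = ENNReal.ofReal (wgeo b s) :=
    fun s _ => hmarg s
  rw [Finset.sum_congr rfl this, Finset.sum_range_succ']
  have e1 : ∀ x ∈ Finset.range n, ENNReal.ofReal (wgeo b (x + 1))
      = ENNReal.ofReal (b * (1 - b) ^ x) := fun x _ => by rw [wgeo_succ]
  have e0 : ENNReal.ofReal (wgeo b 0) = 0 := by simp [wgeo]
  rw [Finset.sum_congr rfl e1, e0, add_zero, ← ENNReal.ofReal_sum_of_nonneg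
    (fun s _ => mul_nonneg hb0.le (pow_nonneg (by linarith) s)), sum_geom_fin]

lemma marg_gt {Ω : Type*} [MeasurableSpace Ω] (μ : Measure Ω) [IsProbabilityMeasure μ]
    (X : Ω → ℕ) (hX : Measurable X) (b : ℝ) (hb0 : 0 < b) (hb1 : b ≤ 1)
    (hmarg : ∀ n, μ {ω | X ω = n} = ENNReal.ofReal (wgeo b n)) :
    ∀ n, μ {ω | n < X ω} = ENNReal.ofReal ((1 - b) ^ n) := by
  intro n
  have hcompl : {ω | n < X ω} = {ω | X ω ≤ n}ᶜ := by
    ext ω; simp only [Set.mem_setOf_eq, Set.mem_compl_iff]; omega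
  have hmeasle : MeasurableSet {ω | X ω ≤ n} := by
    have : {ω | X ω ≤ n} = X ⁻¹' (Set.Iic n) := rfl
    rw [this]
    exact hX ((Set.to_countable _).measurableSet)
  rw [hcompl, prob_compl_eq_one_sub hmeasle, marg_le μ X hX b hb0 hb1 hmarg n]
  have hx0 : (0:ℝ) ≤ 1 - (1 - b) ^ n := (qfun_mem hb0 hb1 n).1
  rw [← ENNReal.ofReal_one, ← ENNReal.ofReal_sub _ hx0]
  congr 1
  ring

end SirIc

namespace SirIc

open ENNReal

variable {V : Type*} [DecidableEq V] [Fintype V]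

lemma sum_ite_prod_eq (E : Finset (V × V)) (Q : Finset (V × V) → Prop) [DecidablePred Q]
    (θ : V × V → ℝ) (hθ : ∀ e ∈ E, 0 ≤ θ e ∧ θ e ≤ 1) :
    ∑ T ∈ E.powerset, (if Q T then
        (∏ e ∈ T, ENNReal.ofReal (θ e)) * ∏ e ∈ E \ T, ENNReal.ofReal (1 - θ e) else 0)
      = ENNReal.ofReal (PhiD E (indQ Q) θ) := by
  rw [PhiD, ENNReal.ofReal_sum_of_nonneg
    (fun T hT => mul_nonneg (indQ_nonneg Q T) (prodθ_nonneg hT hθ))]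
  apply Finset.sum_congr rfl
  intro T hT
  have hTE := Finset.mem_powerset.1 hT
  have hp1 : (0:ℝ) ≤ ∏ e ∈ T, θ e := Finset.prod_nonneg fun e he => (hθ e (hTE he)).1
  have hp2 : (0:ℝ) ≤ ∏ e ∈ E \ T, (1 - θ e) := Finset.prod_nonneg fun e he => by
    have := (hθ e (Finset.mem_sdiff.1 he).1).2; linarith
  by_cases hQT : Q T
  · rw [if_pos hQT]
    have hind : indQ Q T = 1 := by simp [indQ, hQT]
    rw [hind, one_mul, ENNReal.ofReal_mul hp1,
      ENNReal.ofReal_prod_of_nonneg (fun e he => (hθ e (hTE he)).1),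
      ENNReal.ofReal_prod_of_nonneg (fun e he => by
        have := (hθ e (Finset.mem_sdiff.1 he).1).2; linarith : ∀ e ∈ E \ T, (0:ℝ) ≤ 1 - θ e)]
  · rw [if_neg hQT]
    have hind : indQ Q T = 0 := by simp [indQ, hQT]
    rw [hind, zero_mul, ENNReal.ofReal_zero]

lemma p_mem_unit {b g : ℝ} (hb0 : 0 < b) (hb1 : b ≤ 1) (hg0 : 0 < g) (hg1 : g ≤ 1) :
    0 ≤ b / (g + b - g * b) ∧ b / (g + b - g * b) ≤ 1 := by
  have hD : 0 < g + b - g * b := by nlinarith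
  constructor
  · positivity
  · rw [div_le_one hD]; nlinarith

lemma psi_le (E : Finset (V × V)) (Q : Finset (V × V) → Prop)
    (hQm : ∀ T1 T2 : Finset (V × V), T1 ⊆ T2 → Q T1 → Q T2)
    (hQs : ∀ (T : Finset (V × V)) (i j : V × V), i.1 = j.1 →
      Q (insert i (insert j T)) → Q (insert i T) ∨ Q (insert j T))
    (β : V × V → ℝ) (γ : V → ℝ) (p : V × V → ℝ)
    (hβ : ∀ e ∈ E, 0 < β e ∧ β e ≤ 1) (hγ : ∀ u, 0 < γ u ∧ γ u ≤ 1)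
    (hmatch : ∀ e ∈ E, p e = β e / (γ e.1 + β e - γ e.1 * β e))
    (hWone : (∑' r : V → ℕ, ∏ u, ENNReal.ofReal (wgeo (γ u) (r u))) = 1)
    (D : Finset (V × V)) (hD : D ⊆ E) :
    (∑' r : V → ℕ, (∏ u, ENNReal.ofReal (wgeo (γ u) (r u)))
        * ENNReal.ofReal (PhiD E (indQ Q)
            (fun e => if e ∈ D then 1 - (1 - β e) ^ (r e.1) else p e)))
      ≤ ENNReal.ofReal (PhiD E (indQ Q) p) := by
  classical
  have hp01 : ∀ e ∈ E, 0 ≤ p e ∧ p e ≤ 1 := by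
    intro e he
    rw [hmatch e he]
    exact p_mem_unit (hβ e he).1 (hβ e he).2 (hγ e.1).1 (hγ e.1).2
  induction D using Finset.induction with
  | empty =>
    have heq : ∀ r : V → ℕ,
        (fun e : V × V => if e ∈ (∅ : Finset (V × V)) then 1 - (1 - β e) ^ (r e.1) else p e)
        = p := by intro r; funext e; simp
    refine le_of_eq ?_
    calc (∑' r : V → ℕ, (∏ u, ENNReal.ofReal (wgeo (γ u) (r u)))
          * ENNReal.ofReal (PhiD E (indQ Q)
              (fun e => if e ∈ (∅ : Finset (V × V)) then 1 - (1 - β e) ^ (r e.1) else p e)))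
        = ∑' r : V → ℕ, (∏ u, ENNReal.ofReal (wgeo (γ u) (r u)))
            * ENNReal.ofReal (PhiD E (indQ Q) p) := by
          apply tsum_congr; intro r; rw [heq r]
      _ = (∑' r : V → ℕ, ∏ u, ENNReal.ofReal (wgeo (γ u) (r u)))
            * ENNReal.ofReal (PhiD E (indQ Q) p) := ENNReal.tsum_mul_right
      _ = ENNReal.ofReal (PhiD E (indQ Q) p) := by rw [hWone, one_mul]
  | insert _ _ hiD ih =>
    rename_i i D
    have hiE : i ∈ E := hD (Finset.mem_insert_self i D)
    have hDE : D ⊆ E := fun x hx => hD (Finset.mem_insert_of_mem hx)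
    refine le_trans ?_ (ih hDE)
    -- split the r-sum at coordinate u = i.1
    set u : V := i.1 with hu
    set eqv : (V → ℕ) ≃ ℕ × ({ j // j ≠ u } → ℕ) := Equiv.funSplitAt u ℕ with heqv
    have hsymm_at : ∀ (t : ℕ) (rh : { j // j ≠ u } → ℕ), eqv.symm (t, rh) u = t := by
      intro t rh
      simp [heqv, Equiv.funSplitAt_symm_apply]
    have hsymm_ne : ∀ (t : ℕ) (rh : { j // j ≠ u } → ℕ) (w : V) (hw : w ≠ u),
        eqv.symm (t, rh) w = rh ⟨w, hw⟩ := by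
      intro t rh w hw
      simp [heqv, Equiv.funSplitAt_symm_apply, hw]
    set θof : Finset (V × V) → (V → ℕ) → (V × V) → ℝ :=
      fun D' r e => if e ∈ D' then 1 - (1 - β e) ^ (r e.1) else p e with hθof
    have hθ01 : ∀ (D' : Finset (V × V)) (r : V → ℕ), ∀ e ∈ E, 0 ≤ θof D' r e ∧ θof D' r e ≤ 1 := by
      intro D' r e he
      simp only [hθof]
      by_cases heD : e ∈ D'
      · rw [if_pos heD]; exact qfun_mem (hβ e he).1 (hβ e he).2 (r e.1)
      · rw [if_neg heD]; exact hp01 e he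
    have split : ∀ D' : Finset (V × V),
        (∑' r : V → ℕ, (∏ u', ENNReal.ofReal (wgeo (γ u') (r u')))
            * ENNReal.ofReal (PhiD E (indQ Q) (θof D' r)))
        = ∑' rh : { j // j ≠ u } → ℕ,
            (∏ u' ∈ Finset.univ.erase u, ENNReal.ofReal (wgeo (γ u') (eqv.symm (0, rh) u')))
            * ∑' t : ℕ, ENNReal.ofReal (wgeo (γ u) t * PhiD E (indQ Q) (θof D' (eqv.symm (t, rh)))) := by
      intro D'
      rw [← Equiv.tsum_eq eqv.symm (fun r => (∏ u', ENNReal.ofReal (wgeo (γ u') (r u')))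
            * ENNReal.ofReal (PhiD E (indQ Q) (θof D' r)))]
      rw [ENNReal.tsum_prod', ENNReal.tsum_comm]
      apply tsum_congr
      intro rh
      rw [← ENNReal.tsum_mul_left]
      apply tsum_congr
      intro t
      have hprodsplit : (∏ u', ENNReal.ofReal (wgeo (γ u') (eqv.symm (t, rh) u')))
          = ENNReal.ofReal (wgeo (γ u) t)
            * ∏ u' ∈ Finset.univ.erase u, ENNReal.ofReal (wgeo (γ u') (eqv.symm (0, rh) u')) := by
        rw [← Finset.mul_prod_erase Finset.univ _ (Finset.mem_univ u), hsymm_at]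
        congr 1
        apply Finset.prod_congr rfl
        intro w hw
        have hwu : w ≠ u := (Finset.mem_erase.1 hw).1
        rw [hsymm_ne t rh w hwu, hsymm_ne 0 rh w hwu]
      rw [hprodsplit, ENNReal.ofReal_mul (wgeo_nonneg (hγ u).1 (hγ u).2 t)]
      ring
    rw [split (insert i D), split D]
    apply ENNReal.tsum_le_tsum
    intro rh
    apply mul_le_mul_right
    -- inner: compare the t-sums via step_core
    have hβi := hβ i hiE
    have hγu := hγ u
    set θt : ℕ → (V × V) → ℝ := fun t => θof (insert i D) (eqv.symm (t, rh)) with hθt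
    have hofR : ∀ (D' : Finset (V × V)) (t : ℕ), 0 ≤ wgeo (γ u) t * PhiD E (indQ Q) (θof D' (eqv.symm (t, rh))) :=
      fun D' t => mul_nonneg (wgeo_nonneg hγu.1 hγu.2 t)
        (PhiD_nonneg (fun T _ => indQ_nonneg Q T) (hθ01 D' (eqv.symm (t, rh))))
    have hsummable : ∀ (D' : Finset (V × V)),
        Summable (fun t => wgeo (γ u) t * PhiD E (indQ Q) (θof D' (eqv.symm (t, rh)))) := by
      intro D'
      refine Summable.of_nonneg_of_le (hofR D') (fun t => ?_) (summable_wgeo hγu.1 hγu.2)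
      calc wgeo (γ u) t * PhiD E (indQ Q) (θof D' (eqv.symm (t, rh)))
          ≤ wgeo (γ u) t * 1 := mul_le_mul_of_nonneg_left
            (PhiD_le_one (fun T _ => indQ_le_one Q T) (hθ01 D' (eqv.symm (t, rh))))
            (wgeo_nonneg hγu.1 hγu.2 t)
        _ = wgeo (γ u) t := mul_one _
    rw [← ENNReal.ofReal_tsum_of_nonneg (hofR (insert i D)) (hsummable (insert i D)),
      ← ENNReal.ofReal_tsum_of_nonneg (hofR D) (hsummable D)]
    apply ENNReal.ofReal_le_ofReal
    have hui : u = i.1 := rfl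
    have hconst : ∀ e ∈ E, e.1 ≠ i.1 → ∀ m n : ℕ, θt m e = θt n e := by
      intro e he hne m n
      have hwu : e.1 ≠ u := by rw [hui]; exact hne
      simp only [hθt, hθof]
      by_cases heD : e ∈ insert i D
      · rw [if_pos heD, if_pos heD, hsymm_ne m rh e.1 hwu, hsymm_ne n rh e.1 hwu]
      · rw [if_neg heD, if_neg heD]
    have hmono : ∀ e ∈ E, e.1 = i.1 → Monotone (fun n => θt n e) := by
      intro e he heu
      have hwu : e.1 = u := by rw [hui]; exact heu
      by_cases heD : e ∈ insert i D
      · have hfe : (fun n => θt n e) = fun n => 1 - (1 - β e) ^ n := by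
          funext n
          simp only [hθt, hθof, if_pos heD]
          rw [hwu, hsymm_at]
        rw [hfe]
        exact qfun_monotone (hβ e he).1 (hβ e he).2
      · have hfe : (fun n => θt n e) = fun _ => p e := by
          funext n
          simp only [hθt, hθof, if_neg heD]
        rw [hfe]
        exact monotone_const
    have hpa : ∑' n, wgeo (γ u) n * θt n i = p i := by
      have hti : ∀ n : ℕ, θt n i = 1 - (1 - β i) ^ n := by
        intro n
        simp only [hθt, hθof, if_pos (Finset.mem_insert_self i D)]
        rw [← hui, hsymm_at]
      calc ∑' n, wgeo (γ u) n * θt n i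
          = ∑' n, wgeo (γ u) n * (1 - (1 - β i) ^ n) :=
            tsum_congr fun n => by rw [hti n]
        _ = β i / (γ u + β i - γ u * β i) :=
            tsum_wgeo_mul_qfun hγu.1 hγu.2 hβi.1 hβi.2
        _ = p i := by rw [hmatch i hiE, hui]
    have hstep := step_core E Q hQm hQs hiE (wgeo (γ u))
      (wgeo_nonneg hγu.1 hγu.2) (summable_wgeo hγu.1 hγu.2) (tsum_wgeo hγu.1 hγu.2)
      θt (fun n => hθ01 (insert i D) (eqv.symm (n, rh))) hconst hmono (p i) hpa
    refine le_trans hstep (le_of_eq (tsum_congr fun n => ?_))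
    congr 1
    apply PhiD_congr
    intro e he
    by_cases hei : e = i
    · subst hei
      rw [Function.update_self]
      simp only [hθof, if_neg hiD]
    · rw [Function.update_of_ne hei]
      simp only [hθt, hθof]
      have : e ∈ insert i D ↔ e ∈ D := by
        simp [Finset.mem_insert, hei]
      by_cases heD : e ∈ D
      · rw [if_pos (this.2 heD), if_pos heD]
      · rw [if_neg (fun hh => heD (this.1 hh)), if_neg heD]
end SirIc


/-- IC dominates SIR vertex-wise: with matching parameters, for every seed set `S`
and every vertex `v`, the probability that some seed reaches `v` in the IC live-edge
graph is at least the probability that some seed reaches `v` in the SIR live-edge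
graph, i.e. `P(S ∩ RR_{𝒢_IC}(v) ≠ ∅) ≥ P(S ∩ RR_{𝒢_SIR}(v) ≠ ∅)`. -/
theorem stmt_11 {V : Type*} [Fintype V] [DecidableEq V]
    (E : Finset (V × V)) (β : V × V → ℝ) (γ : V → ℝ) (p : V × V → ℝ)
    (hβ : ∀ e ∈ E, 0 < β e ∧ β e ≤ 1) (hγ : ∀ v, 0 < γ v ∧ γ v ≤ 1)
    (hmatch : ∀ e ∈ E, p e = β e / (γ e.1 + β e - γ e.1 * β e))
    -- the IC live-edge model on a probability space `(Ω₁, μ₁)`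
    {Ω₁ : Type*} [MeasurableSpace Ω₁] (μ₁ : Measure Ω₁) [IsProbabilityMeasure μ₁]
    (B : V × V → Ω₁ → Bool) (hBmeas : ∀ e, Measurable (B e))
    (hBdist : ∀ e ∈ E, μ₁ {ω | B e ω = true} = ENNReal.ofReal (p e))
    (hBindep : iIndepFun B μ₁)
    (GIC : Ω₁ → Finset (V × V))
    (hGIC : ∀ ω, GIC ω = E.filter (fun e => B e ω = true))
    -- the SIR live-edge model on a probability space `(Ω₂, μ₂)`
    {Ω₂ : Type*} [MeasurableSpace Ω₂] (μ₂ : Measure Ω₂) [IsProbabilityMeasure μ₂]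
    (R : V → Ω₂ → ℕ) (I : V × V → Ω₂ → ℕ)
    (hRmeas : ∀ v, Measurable (R v)) (hImeas : ∀ e, Measurable (I e))
    (hRdist : ∀ v, ∀ t : ℕ, 1 ≤ t →
      μ₂ {ω | R v ω = t} = ENNReal.ofReal (γ v * (1 - γ v) ^ (t - 1)))
    (hIdist : ∀ e ∈ E, ∀ t : ℕ, 1 ≤ t →
      μ₂ {ω | I e ω = t} = ENNReal.ofReal (β e * (1 - β e) ^ (t - 1)))
    (hindep : iIndepFun (Sum.elim R I : V ⊕ (V × V) → Ω₂ → ℕ) μ₂)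
    (GSIR : Ω₂ → Finset (V × V))
    (hGSIR : ∀ ω, GSIR ω = E.filter (fun e => I e ω ≤ R e.1 ω))
    (S : Finset V) (v : V) :
    μ₁ {ω | ∃ s ∈ S, reaches (GIC ω) s v} ≥ μ₂ {ω | ∃ s ∈ S, reaches (GSIR ω) s v} := by
    classical
  set Q : Finset (V × V) → Prop := fun T => ∃ s ∈ S, reaches T s v with hQ
  have hQm : ∀ T1 T2 : Finset (V × V), T1 ⊆ T2 → Q T1 → Q T2 := by
    rintro T1 T2 hsub ⟨s, hs, h⟩
    exact ⟨s, hs, SirIc.reaches_mono hsub h⟩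
  have hQs : ∀ (T : Finset (V × V)) (i j : V × V), i.1 = j.1 →
      Q (insert i (insert j T)) → Q (insert i T) ∨ Q (insert j T) := by
    rintro T i j hij ⟨s, hs, h⟩
    rcases SirIc.reaches_split T i j hij h with h1 | h1
    · exact Or.inl ⟨s, hs, h1⟩
    · exact Or.inr ⟨s, hs, h1⟩
  have hp01 : ∀ e ∈ E, 0 ≤ p e ∧ p e ≤ 1 := by
    intro e he
    rw [hmatch e he]
    exact SirIc.p_mem_unit (hβ e he).1 (hβ e he).2 (hγ e.1).1 (hγ e.1).2
  have hmargR : ∀ (u : V) (n : ℕ), μ₂ {ω | R u ω = n} = ENNReal.ofReal (SirIc.wgeo (γ u) n) :=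
    fun u => SirIc.marg_eq μ₂ (R u) (hRmeas u) (γ u) (hγ u).1 (hγ u).2 (hRdist u)
  have hmargI : ∀ e ∈ E, ∀ n : ℕ, μ₂ {ω | I e ω = n} = ENNReal.ofReal (SirIc.wgeo (β e) n) :=
    fun e he => SirIc.marg_eq μ₂ (I e) (hImeas e) (β e) (hβ e he).1 (hβ e he).2 (hIdist e he)
  -- hWone
  have hWone : (∑' r : V → ℕ, ∏ u, ENNReal.ofReal (SirIc.wgeo (γ u) (r u))) = 1 := by
    have hprodR : ∀ r : V → ℕ,
        μ₂ (⋂ u, {ω | R u ω = r u}) = ∏ u, ENNReal.ofReal (SirIc.wgeo (γ u) (r u)) := by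
      intro r
      set g : V ⊕ (V × V) → Set Ω₂ :=
        Sum.elim (fun u => {ω | R u ω = r u}) (fun _ => Set.univ) with hg
      have hset : (⋂ u, {ω | R u ω = r u}) = ⋂ i ∈ Finset.univ.disjSum (∅ : Finset (V × V)), g i := by
        ext ω
        simp only [Set.mem_iInter, Finset.mem_disjSum, Set.mem_setOf_eq]
        constructor
        · rintro h (u | e) hi
          · exact h u
          · simp [hg]
        · intro h u
          exact h (Sum.inl u) (by simp)
      have hprod := hindep.meas_biInter (S := Finset.univ.disjSum (∅ : Finset (V × V)))
        (s := g) ?_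
      · rw [hset, hprod, Finset.prod_disjSum, Finset.prod_empty, mul_one]
        apply Finset.prod_congr rfl
        intro u _
        rw [show g (Sum.inl u) = {ω | R u ω = r u} from rfl, hmargR u (r u)]
      · rintro (u | e) hi
        · exact ⟨{r u}, (Set.to_countable _).measurableSet, rfl⟩
        · exact ⟨Set.univ, MeasurableSet.univ, by simp [hg]⟩
    have hcover : (Set.univ : Set Ω₂) = ⋃ r : V → ℕ, ⋂ u, {ω | R u ω = r u} := by
      ext ω
      simp only [Set.mem_univ, Set.mem_iUnion, Set.mem_iInter, Set.mem_setOf_eq, true_iff]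
      exact ⟨fun u => R u ω, fun u => rfl⟩
    have hdisj : Pairwise (Function.onFun Disjoint (fun r : V → ℕ => ⋂ u, {ω | R u ω = r u})) := by
      intro r1 r2 hne
      apply Set.disjoint_left.2
      intro ω h1 h2
      apply hne
      funext u
      have e1 := Set.mem_iInter.1 h1 u
      have e2 := Set.mem_iInter.1 h2 u
      simp only [Set.mem_setOf_eq] at e1 e2
      rw [← e1, ← e2]
    have hmeas : ∀ r : V → ℕ, MeasurableSet (⋂ u, {ω | R u ω = r u}) :=
      fun r => MeasurableSet.iInter fun u => hRmeas u (measurableSet_singleton (r u))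
    calc (∑' r : V → ℕ, ∏ u, ENNReal.ofReal (SirIc.wgeo (γ u) (r u)))
        = ∑' r : V → ℕ, μ₂ (⋂ u, {ω | R u ω = r u}) := tsum_congr fun r => (hprodR r).symm
      _ = μ₂ (⋃ r : V → ℕ, ⋂ u, {ω | R u ω = r u}) := (measure_iUnion hdisj hmeas).symm
      _ = μ₂ Set.univ := by rw [← hcover]
      _ = 1 := measure_univ
  -- IC side
  have hICset : {ω | ∃ s ∈ S, reaches (GIC ω) s v}
      = {ω : Ω₁ | Q (E.filter (fun e => B e ω = true))} := by
    ext ω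
    rw [Set.mem_setOf_eq, Set.mem_setOf_eq, hQ, hGIC ω]
  have hmeasIC : ∀ T ∈ E.powerset,
      MeasurableSet {ω : Ω₁ | E.filter (fun e => B e ω = true) = T} := by
    intro T hT
    rw [SirIc.filter_eq_sets E T (Finset.mem_powerset.1 hT) (fun ω e => B e ω = true)]
    apply MeasurableSet.inter
    · exact MeasurableSet.biInter (Finset.countable_toSet T)
        (fun e _ => hBmeas e (measurableSet_singleton true))
    · exact MeasurableSet.biInter (Finset.countable_toSet (E \ T))
        (fun e _ => (hBmeas e (measurableSet_singleton true)).compl)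
  have hIC : μ₁ {ω | ∃ s ∈ S, reaches (GIC ω) s v}
      = ENNReal.ofReal (SirIc.PhiD E (SirIc.indQ Q) p) := by
    rw [hICset, SirIc.measure_filter_event μ₁ E Q (fun ω e => B e ω = true) hmeasIC]
    rw [← SirIc.sum_ite_prod_eq E Q p hp01]
    apply Finset.sum_congr rfl
    intro T hT
    have hTE := Finset.mem_powerset.1 hT
    by_cases hQT : Q T
    · rw [if_pos hQT, if_pos hQT,
        SirIc.IC_prod μ₁ B hBmeas hBindep E T hTE]
      congr 1
      · exact Finset.prod_congr rfl fun e he => by rw [hBdist e (hTE he)]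
      · apply Finset.prod_congr rfl
        intro e he
        have heE := (Finset.mem_sdiff.1 he).1
        rw [hBdist e heE, ENNReal.ofReal_sub 1 (hp01 e heE).1, ENNReal.ofReal_one]
    · rw [if_neg hQT, if_neg hQT]
  -- SIR side
  have hSIRset : {ω | ∃ s ∈ S, reaches (GSIR ω) s v}
      = {ω : Ω₂ | Q (E.filter (fun e => I e ω ≤ R e.1 ω))} := by
    ext ω
    rw [Set.mem_setOf_eq, Set.mem_setOf_eq, hQ, hGSIR ω]
  have hmeasSIR : ∀ T ∈ E.powerset,
      MeasurableSet {ω : Ω₂ | E.filter (fun e => I e ω ≤ R e.1 ω) = T} := by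
    intro T hT
    rw [SirIc.filter_eq_sets E T (Finset.mem_powerset.1 hT) (fun ω e => I e ω ≤ R e.1 ω)]
    apply MeasurableSet.inter
    · exact MeasurableSet.biInter (Finset.countable_toSet T)
        (fun e _ => measurableSet_le (hImeas e) (hRmeas e.1))
    · exact MeasurableSet.biInter (Finset.countable_toSet (E \ T))
        (fun e _ => (measurableSet_le (hImeas e) (hRmeas e.1)).compl)
  have hSIR : μ₂ {ω | ∃ s ∈ S, reaches (GSIR ω) s v}
      = ∑' r : V → ℕ, (∏ u, ENNReal.ofReal (SirIc.wgeo (γ u) (r u)))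
          * ENNReal.ofReal (SirIc.PhiD E (SirIc.indQ Q)
              (fun e => if e ∈ E then 1 - (1 - β e) ^ (r e.1) else p e)) := by
    rw [hSIRset, SirIc.measure_filter_event μ₂ E Q (fun ω e => I e ω ≤ R e.1 ω) hmeasSIR]
    have hperT : ∀ T ∈ E.powerset,
        (if Q T then μ₂ {ω : Ω₂ | E.filter (fun e => I e ω ≤ R e.1 ω) = T} else 0)
        = ∑' r : V → ℕ, (if Q T then
            (∏ u, ENNReal.ofReal (SirIc.wgeo (γ u) (r u)))
            * ((∏ e ∈ T, ENNReal.ofReal (1 - (1 - β e) ^ (r e.1)))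
              * ∏ e ∈ E \ T, ENNReal.ofReal ((1 - β e) ^ (r e.1))) else 0) := by
      intro T hT
      have hTE := Finset.mem_powerset.1 hT
      by_cases hQT : Q T
      · rw [if_pos hQT, SirIc.SIR_prod μ₂ R I hRmeas hImeas hindep E T hTE]
        apply tsum_congr
        intro r
        rw [if_pos hQT]
        congr 1
        · exact Finset.prod_congr rfl fun u _ => hmargR u (r u)
        congr 1
        · apply Finset.prod_congr rfl
          intro e he
          have heE := hTE he
          rw [SirIc.marg_le μ₂ (I e) (hImeas e) (β e) (hβ e heE).1 (hβ e heE).2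
            (hmargI e heE) (r e.1)]
        · apply Finset.prod_congr rfl
          intro e he
          have heE := (Finset.mem_sdiff.1 he).1
          rw [SirIc.marg_gt μ₂ (I e) (hImeas e) (β e) (hβ e heE).1 (hβ e heE).2
            (hmargI e heE) (r e.1)]
      · simp only [if_neg hQT, tsum_zero]
    rw [Finset.sum_congr rfl hperT,
      ← Summable.tsum_finsetSum (fun T _ => ENNReal.summable)]
    apply tsum_congr
    intro r
    have hq01 : ∀ e ∈ E, 0 ≤ 1 - (1 - β e) ^ (r e.1) ∧ 1 - (1 - β e) ^ (r e.1) ≤ 1 :=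
      fun e he => SirIc.qfun_mem (hβ e he).1 (hβ e he).2 (r e.1)
    have hstep : ∀ T ∈ E.powerset, (if Q T then
        (∏ u, ENNReal.ofReal (SirIc.wgeo (γ u) (r u)))
        * ((∏ e ∈ T, ENNReal.ofReal (1 - (1 - β e) ^ (r e.1)))
          * ∏ e ∈ E \ T, ENNReal.ofReal ((1 - β e) ^ (r e.1))) else 0)
        = (∏ u, ENNReal.ofReal (SirIc.wgeo (γ u) (r u)))
          * (if Q T then (∏ e ∈ T, ENNReal.ofReal (1 - (1 - β e) ^ (r e.1)))
            * ∏ e ∈ E \ T, ENNReal.ofReal (1 - (1 - (1 - β e) ^ (r e.1))) else 0) := by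
      intro T hT
      by_cases hQT : Q T
      · rw [if_pos hQT, if_pos hQT]
        congr 2
        apply Finset.prod_congr rfl
        intro e he
        congr 1
        ring
      · rw [if_neg hQT, if_neg hQT, mul_zero]
    rw [Finset.sum_congr rfl hstep, ← Finset.mul_sum,
      SirIc.sum_ite_prod_eq E Q _ hq01]
    congr 1
    exact congrArg ENNReal.ofReal
      (SirIc.PhiD_congr _ (fun e he => by rw [if_pos he]))
  rw [ge_iff_le, hSIR, hIC]
  exact SirIc.psi_le E Q hQm hQs β γ p hβ hγ hmatch hWone E (le_refl E)
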